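/- Let 0 < μ < L, Q = L/μ > 1, α = 1/L, β = (√Q − 1)/(√Q + 1). Let s ≥ 1 and k_1, …, k_s ≥ 1 be integers, set k = k_1 + ⋯ + k_s + s, and let T = B(L) B(μ)^{k_1} B(L) B(μ)^{k_2} ⋯ B(L) B(μ)^{k_s}. Then the spectral radius of T equals ((√Q − 1)/√Q)^k · k_1 k_2 ⋯ k_s. -/

import Mathlib

set_option maxHeartbeats 1000000

open Matrix

/-- The 2×2 matrix `B(λ)` from the analysis of Nesterov's method. -/
noncomputable def Bmat (α β lam : ℝ) : Matrix (Fin 2) (Fin 2) ℝ :=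
  !![1 - α * (1 + β) * lam, β ^ 2; -(α * lam), β]

/-- The spectral radius of a real square matrix: the maximum modulus of its complex
eigenvalues. -/
noncomputable def specRad {m : Type*} [Fintype m] [DecidableEq m]
    (A : Matrix m m ℝ) : ℝ :=
  sSup ((fun z : ℂ => ‖z‖) '' spectrum ℂ (A.map (algebraMap ℝ ℂ)))

lemma specRad_of_det_zero (A : Matrix (Fin 2) (Fin 2) ℝ) (h : A.det = 0) :
    specRad A = |A.trace| := by
  have hmem : ∀ z : ℂ, z ∈ spectrum ℂ (A.map (algebraMap ℝ ℂ)) ↔ z = 0 ∨ z = (A.trace : ℂ) := by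
    intro z
    rw [spectrum.mem_iff, Matrix.isUnit_iff_isUnit_det, isUnit_iff_ne_zero, not_ne_iff]
    have hd : ((algebraMap ℂ (Matrix (Fin 2) (Fin 2) ℂ)) z - A.map (algebraMap ℝ ℂ)).det
        = z * (z - (A.trace : ℂ)) := by
      have hdet : (A 0 0 : ℂ) * (A 1 1 : ℂ) - (A 0 1 : ℂ) * (A 1 0 : ℂ) = 0 := by
        have := h
        rw [Matrix.det_fin_two] at this
        exact_mod_cast congrArg (Complex.ofReal) this
      rw [Matrix.det_fin_two, Matrix.trace_fin_two]
      simp [Matrix.algebraMap_matrix_apply, Matrix.sub_apply, Matrix.map_apply]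
      ring_nf
      linear_combination hdet
    rw [hd, mul_eq_zero, sub_eq_zero]
  have hset : spectrum ℂ (A.map (algebraMap ℝ ℂ)) = {0, (A.trace : ℂ)} := by
    ext z; rw [hmem]; simp [Set.mem_insert_iff]
  rw [specRad, hset, Set.image_pair]
  simp only [norm_zero, Complex.norm_real, Real.norm_eq_abs]
  rw [csSup_pair]
  exact sup_eq_right.mpr (abs_nonneg _)

lemma pow_formula (r : ℝ) (N B : Matrix (Fin 2) (Fin 2) ℝ) (hB : B = r • 1 + N)
    (hN : N * N = 0) (j : ℕ) :
    B ^ (j+1) = r^(j+1) • (1 : Matrix (Fin 2) (Fin 2) ℝ) + (((j:ℝ)+1) * r^j) • N := by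
  induction j with
  | zero => simp [hB]
  | succ j ih =>
    rw [pow_succ, ih, hB]
    rw [add_mul, mul_add, mul_add]
    simp only [Matrix.smul_mul, Matrix.mul_smul, hN, smul_zero, mul_one, one_mul, smul_smul]
    push_cast
    module

lemma prod_ofFn_key (BL : Matrix (Fin 2) (Fin 2) ℝ) (n : ℕ)
    (M : Fin (n+1) → Matrix (Fin 2) (Fin 2) ℝ) (c : Fin (n+1) → ℝ)
    (h : ∀ i, BL * M i * BL = c i • BL) :
    (List.ofFn fun i => BL * M i).prod
      = (∏ i : Fin n, c i.castSucc) • (BL * M (Fin.last n)) := by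
  induction n with
  | zero => simp
  | succ n ih =>
    rw [List.ofFn_succ, List.prod_cons,
      ih (fun i => M i.succ) (fun i => c i.succ) (fun i => h i.succ)]
    rw [Matrix.mul_smul, ← Matrix.mul_assoc, h 0, Matrix.smul_mul, smul_smul]
    congr 1
    rw [Fin.prod_univ_succ]
    simp [Fin.succ_castSucc, mul_comm, -Fin.castSucc_succ]

/-- With `α = 1/L` and `β = (√Q−1)/(√Q+1)`, the spectral radius of
`T = B(L) B(μ)^{k₁} B(L) B(μ)^{k₂} ⋯ B(L) B(μ)^{kₛ}` equals
`((√Q−1)/√Q)^k · k₁k₂⋯kₛ`, where `k = k₁ + ⋯ + kₛ + s`. -/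
theorem stmt4 (μ L : ℝ) (hμ : 0 < μ) (hμL : μ < L)
    (Q : ℝ) (hQ : Q = L / μ) (hQ1 : 1 < Q)
    (α β : ℝ) (hα : α = 1 / L) (hβ : β = (Real.sqrt Q - 1) / (Real.sqrt Q + 1))
    (s : ℕ) (hs : 1 ≤ s) (ks : Fin s → ℕ) (hks : ∀ i, 1 ≤ ks i)
    (k : ℕ) (hk : k = (∑ i, ks i) + s)
    (T : Matrix (Fin 2) (Fin 2) ℝ)
    (hT : T = (List.ofFn (fun i : Fin s => Bmat α β L * (Bmat α β μ) ^ (ks i))).prod) :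
    specRad T = ((Real.sqrt Q - 1) / Real.sqrt Q) ^ k * ∏ i, (ks i : ℝ) := by
  have hL : 0 < L := hμ.trans hμL
  have hLne : L ≠ 0 := ne_of_gt hL
  have hμne : μ ≠ 0 := ne_of_gt hμ
  set x := Real.sqrt Q with hxdef
  have hx2 : x ^ 2 = Q := Real.sq_sqrt (by linarith)
  have hx1 : 1 < x := by nlinarith [Real.sqrt_nonneg Q]
  have hxne : x ≠ 0 := by positivity
  have hx1ne : x + 1 ≠ 0 := by positivity
  subst hβ hα
  set r : ℝ := (x - 1) / x with hr
  set b : ℝ := (x - 1) / (x + 1) with hb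
  have hq : (1/L) * μ = 1 / x ^ 2 := by rw [hx2, hQ]; field_simp
  set BL : Matrix (Fin 2) (Fin 2) ℝ := !![-b, b^2; -1, b] with hBLdef
  set MU : Matrix (Fin 2) (Fin 2) ℝ := !![1 - (1+b)/x^2, b^2; -(1/x^2), b] with hMUdef
  set NN : Matrix (Fin 2) (Fin 2) ℝ :=
    !![(x-1)/(x*(x+1)), b^2; -(1/x^2), -((x-1)/(x*(x+1)))] with hNNdef
  have hBL : Bmat (1/L) b L = BL := by
    rw [Bmat, hBLdef]
    ext i j; fin_cases i <;> fin_cases j <;> simp <;> field_simp <;> ring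
  have hBμ : Bmat (1/L) b μ = MU := by
    rw [Bmat, hMUdef]
    ext i j
    fin_cases i <;> fin_cases j <;> simp <;>
      [linear_combination (1+b) * hq; linear_combination hq]
  have hMUeq : MU = r • 1 + NN := by
    rw [hMUdef, hNNdef]
    ext i j
    fin_cases i <;> fin_cases j <;>
      · simp [Matrix.mul_apply, Fin.sum_univ_two, Matrix.smul_apply, smul_eq_mul, Matrix.one_apply]
        try rw [hb]
        try rw [hr]
        try field_simp
        try ring
  have hBL2 : BL * BL = 0 := by
    rw [hBLdef]
    ext i j
    fin_cases i <;> fin_cases j <;>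
      simp [Matrix.mul_apply, Fin.sum_univ_two] <;> ring
  have hN2 : NN * NN = 0 := by
    rw [hNNdef]
    ext i j
    fin_cases i <;> fin_cases j <;>
      · simp [Matrix.mul_apply, Fin.sum_univ_two, Matrix.smul_apply, smul_eq_mul, Matrix.one_apply]
        try rw [hb]
        try rw [hr]
        try field_simp
        try ring
  have hKey : BL * NN * BL = (-(r^2)) • BL := by
    rw [hBLdef, hNNdef]
    ext i j
    fin_cases i <;> fin_cases j <;>
      · simp [Matrix.mul_apply, Fin.sum_univ_two, Matrix.smul_apply, smul_eq_mul, Matrix.one_apply]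
        try rw [hb]
        try rw [hr]
        try field_simp
        try ring
  have htrBL : BL.trace = 0 := by simp [hBLdef, Matrix.trace_fin_two]
  have htrBLN : (BL * NN).trace = -(r^2) := by
    rw [hBLdef, hNNdef]
    simp [Matrix.trace_fin_two, Matrix.mul_apply, Fin.sum_univ_two]
    rw [hb, hr]
    field_simp
    ring
  have hdetBL : BL.det = 0 := by simp [hBLdef, Matrix.det_fin_two]; ring
  obtain ⟨n, rfl⟩ : ∃ n, s = n + 1 := ⟨s - 1, by omega⟩
  set M : Fin (n+1) → Matrix (Fin 2) (Fin 2) ℝ := fun i => MU ^ (ks i) with hM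
  set c : Fin (n+1) → ℝ := fun i => -((ks i : ℝ)) * r ^ (ks i + 1) with hc
  have h1 : ∀ i, BL * M i * BL = c i • BL := by
    intro i
    obtain ⟨j, hj⟩ : ∃ j, ks i = j + 1 := ⟨ks i - 1, by have := hks i; omega⟩
    have hcomp : BL * (r^(j+1) • (1 : Matrix (Fin 2) (Fin 2) ℝ) + (((j:ℝ)+1) * r^j) • NN) * BL
        = r^(j+1) • (BL * BL) + (((j:ℝ)+1) * r^j) • (BL * NN * BL) := by
      rw [Matrix.mul_add, Matrix.add_mul, Matrix.mul_smul, Matrix.smul_mul, Matrix.mul_smul,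
        Matrix.smul_mul, Matrix.mul_one]
    show BL * MU ^ (ks i) * BL = (-((ks i : ℝ)) * r ^ (ks i + 1)) • BL
    rw [hj, pow_formula r NN MU hMUeq hN2 j, hcomp, hBL2, hKey, smul_zero, zero_add, smul_smul]
    congr 1
    push_cast
    ring
  have h2 : ∀ i, (BL * M i).trace = c i := by
    intro i
    obtain ⟨j, hj⟩ : ∃ j, ks i = j + 1 := ⟨ks i - 1, by have := hks i; omega⟩
    show (BL * MU ^ (ks i)).trace = -((ks i : ℝ)) * r ^ (ks i + 1)
    rw [hj, pow_formula r NN MU hMUeq hN2 j, Matrix.mul_add, Matrix.mul_smul, Matrix.mul_smul,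
      Matrix.mul_one, Matrix.trace_add, Matrix.trace_smul, Matrix.trace_smul, htrBL, htrBLN]
    push_cast
    simp only [smul_eq_mul]
    ring
  have hTs : T = (∏ i : Fin n, c i.castSucc) • (BL * M (Fin.last n)) := by
    rw [hT]
    simp only [hBL, hBμ]
    exact prod_ofFn_key BL n M c h1
  have hdetT : T.det = 0 := by
    rw [hTs]
    simp [Matrix.det_smul, Matrix.det_mul, hdetBL]
  have htrT : T.trace = ∏ i : Fin (n+1), c i := by
    rw [hTs, Matrix.trace_smul, h2 (Fin.last n), smul_eq_mul, Fin.prod_univ_castSucc]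
  rw [specRad_of_det_zero T hdetT, htrT, Finset.abs_prod]
  have hr0 : 0 ≤ r := by
    rw [hr]
    apply div_nonneg <;> linarith
  have habs : ∀ i, |c i| = (ks i : ℝ) * r ^ (ks i + 1) := by
    intro i
    show |-((ks i : ℝ)) * r ^ (ks i + 1)| = _
    rw [abs_mul, abs_neg, Nat.abs_cast, abs_pow, abs_of_nonneg hr0]
  rw [Finset.prod_congr rfl (fun i _ => habs i), Finset.prod_mul_distrib,
    Finset.prod_pow_eq_pow_sum]
  have hsum : ∑ i : Fin (n+1), (ks i + 1) = k := by
    rw [hk, Finset.sum_add_distrib]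
    simp
  rw [hsum]
  ring
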